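/- Let E(u) = (1/2)∫ u_x² − (1/6)∫ u⁶ + (γ/(q+1))∫ |u|^{q+1} with γ > 0 and q > 5. Then there is a constant C depending only on q such that for every u ∈ H¹(ℝ), ‖u_x‖_{L²}² ≤ C(|E(u)| + γ^{−4/(q−5)} ‖u‖_{L²}²). In particular the H¹ norm of u is controlled by its mass and energy. -/

import Mathlib

open MeasureTheory

theorem stmt_3 (q : ℝ) (hq : 5 < q) :
    ∃ C > 0, ∀ γ : ℝ, 0 < γ → ∀ u : ℝ → ℝ, Differentiable ℝ u →
      Integrable (fun x => (u x) ^ 2) → Integrable (fun x => (deriv u x) ^ 2) →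
      Integrable (fun x => (u x) ^ 6) → Integrable (fun x => |u x| ^ (q + 1)) →
      (∫ x, (deriv u x) ^ 2) ≤
        C * (|(1 / 2) * (∫ x, (deriv u x) ^ 2) - (1 / 6) * (∫ x, (u x) ^ 6)
              + (γ / (q + 1)) * (∫ x, |u x| ^ (q + 1))|
            + γ ^ (-(4 / (q - 5))) * (∫ x, (u x) ^ 2)) := by
  have hq5 : (0:ℝ) < q - 5 := by linarith
  set K : ℝ := ((q + 1) / 6) ^ (4 / (q - 5)) with hK
  have hKpos : 0 < K := Real.rpow_pos_of_pos (by linarith) _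
  refine ⟨2 + K / 3, by positivity, ?_⟩
  intro γ hγ u hu hu2 hd2 hu6 huq
  set M : ℝ := ((q + 1) / (6 * γ)) ^ (1 / (q - 5)) with hM
  have hb : (0:ℝ) < (q + 1) / (6 * γ) := by positivity
  have hMpos : 0 < M := Real.rpow_pos_of_pos hb _
  -- pointwise bound
  have hpt : ∀ x, (u x) ^ 6 ≤ M ^ 4 * (u x) ^ 2 + M ^ (5 - q) * |u x| ^ (q + 1) := by
    intro x
    rcases le_or_gt (|u x|) M with h | h
    · have h4 : (u x) ^ 4 ≤ M ^ 4 := by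
        calc (u x) ^ 4 = |u x| ^ 4 := by
              rw [← abs_pow, abs_of_nonneg (by positivity)]
          _ ≤ M ^ 4 := pow_le_pow_left₀ (abs_nonneg _) h 4
      have h1 : (u x) ^ 6 ≤ M ^ 4 * (u x) ^ 2 := by nlinarith [sq_nonneg (u x)]
      have h2 : 0 ≤ M ^ (5 - q) * |u x| ^ (q + 1) := by positivity
      linarith
    · have hux : 0 < |u x| := lt_trans hMpos h
      have h1 : (u x) ^ 6 = |u x| ^ (q + 1) * |u x| ^ (5 - q) := by
        rw [← Real.rpow_add hux]
        have he : q + 1 + (5 - q) = ((6:ℕ):ℝ) := by push_cast; ring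
        rw [he, Real.rpow_natCast, ← abs_pow, abs_of_nonneg (by positivity)]
      have h2 : |u x| ^ (5 - q) ≤ M ^ (5 - q) :=
        Real.rpow_le_rpow_of_nonpos hMpos h.le (by linarith)
      have h3 : 0 ≤ M ^ 4 * (u x) ^ 2 := by positivity
      have h4 : 0 ≤ |u x| ^ (q + 1) := Real.rpow_nonneg (abs_nonneg _) _
      nlinarith
  have hS : (∫ x, (u x) ^ 6) ≤
      M ^ 4 * (∫ x, (u x) ^ 2) + M ^ (5 - q) * (∫ x, |u x| ^ (q + 1)) := by
    calc (∫ x, (u x) ^ 6)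
        ≤ ∫ x, (M ^ 4 * (u x) ^ 2 + M ^ (5 - q) * |u x| ^ (q + 1)) :=
          integral_mono hu6 ((hu2.const_mul _).add (huq.const_mul _)) hpt
      _ = _ := by
          rw [integral_add (hu2.const_mul _) (huq.const_mul _),
            integral_const_mul, integral_const_mul]
  have hM5q : M ^ (5 - q) = 6 * γ / (q + 1) := by
    rw [hM, ← Real.rpow_mul hb.le]
    have he : 1 / (q - 5) * (5 - q) = -1 := by
      field_simp
      ring
    rw [he, Real.rpow_neg_one, inv_div]
  have hM4 : M ^ 4 = K * γ ^ (-(4 / (q - 5))) := by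
    have hbsplit : (q + 1) / (6 * γ) = ((q + 1) / 6) * γ⁻¹ := by
      field_simp
    rw [hM, ← Real.rpow_natCast (((q + 1) / (6 * γ)) ^ (1 / (q - 5))) 4,
      ← Real.rpow_mul hb.le]
    have he : 1 / (q - 5) * ((4:ℕ):ℝ) = 4 / (q - 5) := by
      push_cast; ring
    rw [he, hbsplit, Real.mul_rpow (by positivity) (by positivity), hK,
      Real.inv_rpow hγ.le, ← Real.rpow_neg hγ.le]
  rw [hM4, hM5q] at hS
  have hE := le_abs_self ((1 / 2) * (∫ x, (deriv u x) ^ 2) - (1 / 6) * (∫ x, (u x) ^ 6)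
      + (γ / (q + 1)) * (∫ x, |u x| ^ (q + 1)))
  have hA : 0 ≤ |(1 / 2) * (∫ x, (deriv u x) ^ 2) - (1 / 6) * (∫ x, (u x) ^ 6)
      + (γ / (q + 1)) * (∫ x, |u x| ^ (q + 1))| := abs_nonneg _
  have hm : 0 ≤ ∫ x, (u x) ^ 2 := integral_nonneg fun x => by positivity
  have hP : 0 ≤ ∫ x, |u x| ^ (q + 1) :=
    integral_nonneg fun x => Real.rpow_nonneg (abs_nonneg _) _
  have hge : 0 ≤ γ ^ (-(4 / (q - 5))) := (Real.rpow_pos_of_pos hγ _).le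
  have hq1 : (0:ℝ) < q + 1 := by linarith
  have hkey : 6 * γ / (q + 1) * (∫ x, |u x| ^ (q + 1)) / 3
      = 2 * ((γ / (q + 1)) * (∫ x, |u x| ^ (q + 1))) := by
    field_simp; ring
  nlinarith [mul_nonneg hge hm, mul_nonneg hKpos.le (mul_nonneg hge hm)]
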